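/- Let n ≥ 3 be an integer. Then d(r)/δ(r) → 1 as r → ∞. -/

import Mathlib

open Filter MeasureTheory

noncomputable def schR (n : ℕ) : ℝ := ((4 : ℝ) / 3) ^ (((n : ℝ) - 2)⁻¹)

/-- The weight function `δ` of the Schwarzschild Hardy inequality. -/
noncomputable def schDelta (n : ℕ) (r : ℝ) : ℝ :=
  if r < schR n then 2 * r ^ (n - 1) * Real.sqrt ((r ^ (n - 2) - 1) / r ^ (n - 2))
  else 2 * r ^ (n - 1) * (1 - Real.sqrt ((r ^ (n - 2) - 1) / r ^ (n - 2)))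

/-- The Riemannian distance from the event horizon:
`d(r) = ∫₁^r √(ξ^(n−2)/(ξ^(n−2)−1)) dξ`. -/
noncomputable def schDist (n : ℕ) (r : ℝ) : ℝ :=
  ∫ ξ in (1 : ℝ)..r, Real.sqrt (ξ ^ (n - 2) / (ξ ^ (n - 2) - 1))

/-- pointwise upper bound for the integrand -/
lemma sch_integrand_le (m : ℕ) (hm : 1 ≤ m) {ξ : ℝ} (hξ : 1 < ξ) :
    Real.sqrt (ξ ^ m / (ξ ^ m - 1)) ≤ 1 + (ξ - 1) ^ (-(1/2) : ℝ) := by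
  have h1 : (1 : ℝ) < ξ ^ m := by
    calc (1:ℝ) < ξ := hξ
    _ ≤ ξ ^ m := le_self_pow₀ (le_of_lt hξ) (by omega)
  have h2 : ξ - 1 ≤ ξ ^ m - 1 := by
    have : ξ ≤ ξ ^ m := le_self_pow₀ (le_of_lt hξ) (by omega)
    linarith
  have ht0 : (0 : ℝ) ≤ (ξ - 1) ^ (-(1/2) : ℝ) := Real.rpow_nonneg (by linarith) _
  have ht2 : ((ξ - 1) ^ (-(1/2) : ℝ)) ^ 2 = (ξ - 1)⁻¹ := by
    rw [← Real.rpow_natCast ((ξ - 1) ^ (-(1/2) : ℝ)) 2, ← Real.rpow_mul (by linarith)]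
    norm_num [Real.rpow_neg_one]
  rw [Real.sqrt_le_iff]
  constructor
  · positivity
  · have h3 : (0:ℝ) < ξ - 1 := by linarith
    have hle : ξ ^ m / (ξ ^ m - 1) ≤ 1 + (ξ - 1)⁻¹ := by
      have e1 : ξ ^ m / (ξ ^ m - 1) = 1 + (ξ ^ m - 1)⁻¹ := by
        rw [inv_eq_one_div, one_add_div (by linarith : ξ ^ m - 1 ≠ 0)]
        ring_nf
      have e2 : (ξ ^ m - 1)⁻¹ ≤ (ξ - 1)⁻¹ := by
        apply inv_anti₀ h3 h2
      rw [e1]; linarith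
    calc ξ ^ m / (ξ ^ m - 1) ≤ 1 + (ξ - 1)⁻¹ := hle
    _ ≤ (1 + (ξ - 1) ^ (-(1/2) : ℝ)) ^ 2 := by nlinarith

lemma sch_majorant_integrable (r : ℝ) :
    IntervalIntegrable (fun ξ : ℝ => 1 + (ξ - 1) ^ (-(1/2) : ℝ)) volume 1 r := by
  apply IntervalIntegrable.add intervalIntegrable_const
  have h := (intervalIntegral.intervalIntegrable_rpow' (a := 0) (b := r - 1)
    (r := (-(1/2) : ℝ)) (by norm_num)).comp_sub_right 1
  simpa using h

lemma sch_integrand_integrable (m : ℕ) (hm : 1 ≤ m) {r : ℝ} (hr : 1 ≤ r) :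
    IntervalIntegrable (fun ξ : ℝ => Real.sqrt (ξ ^ m / (ξ ^ m - 1))) volume 1 r := by
  apply (sch_majorant_integrable r).mono_fun'
  · apply Measurable.aestronglyMeasurable
    exact (measurable_id.pow_const m |>.div ((measurable_id.pow_const m).sub
      measurable_const)).sqrt
  · rw [Set.uIoc_of_le hr]
    filter_upwards [ae_restrict_mem measurableSet_Ioc] with ξ hξ
    rw [Real.norm_eq_abs, abs_of_nonneg (Real.sqrt_nonneg _)]
    exact sch_integrand_le m hm hξ.1

lemma sch_dist_lower (m : ℕ) (hm : 1 ≤ m) {r : ℝ} (hr : 1 ≤ r) :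
    r - 1 ≤ ∫ ξ in (1:ℝ)..r, Real.sqrt (ξ ^ m / (ξ ^ m - 1)) := by
  have h := intervalIntegral.integral_mono_ae_restrict (μ := volume) (a := 1) (b := r)
    (f := fun _ => (1:ℝ)) (g := fun ξ => Real.sqrt (ξ ^ m / (ξ ^ m - 1))) hr
    intervalIntegrable_const (sch_integrand_integrable m hm hr) ?_
  · simpa using h
  · rw [← Measure.restrict_congr_set MeasureTheory.Ioc_ae_eq_Icc]
    filter_upwards [ae_restrict_mem measurableSet_Ioc] with ξ hξ
    have h1 : (1 : ℝ) < ξ ^ m := by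
      calc (1:ℝ) < ξ := hξ.1
      _ ≤ ξ ^ m := le_self_pow₀ (le_of_lt hξ.1) (by omega)
    have h4 : (1:ℝ) ≤ ξ ^ m / (ξ ^ m - 1) := by rw [le_div_iff₀ (by linarith)]; linarith
    simpa using Real.sqrt_le_sqrt h4

lemma sch_dist_upper (m : ℕ) (hm : 1 ≤ m) {r : ℝ} (hr : 1 ≤ r) :
    (∫ ξ in (1:ℝ)..r, Real.sqrt (ξ ^ m / (ξ ^ m - 1))) ≤ r - 1 + 2 * Real.sqrt (r - 1) := by
  have h := intervalIntegral.integral_mono_ae_restrict (μ := volume) (a := 1) (b := r)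
    (f := fun ξ => Real.sqrt (ξ ^ m / (ξ ^ m - 1)))
    (g := fun ξ => 1 + (ξ - 1) ^ (-(1/2) : ℝ)) hr
    (sch_integrand_integrable m hm hr) (sch_majorant_integrable r) ?_
  · refine h.trans (le_of_eq ?_)
    rw [intervalIntegral.integral_add intervalIntegrable_const
      (by simpa using (intervalIntegral.intervalIntegrable_rpow' (a := 0) (b := r - 1)
        (r := (-(1/2) : ℝ)) (by norm_num)).comp_sub_right 1)]
    have h2 : (∫ ξ in (1:ℝ)..r, (ξ - 1) ^ (-(1/2) : ℝ)) = 2 * Real.sqrt (r - 1) := by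
      rw [intervalIntegral.integral_comp_sub_right (fun x : ℝ => x ^ (-(1/2) : ℝ)) 1]
      rw [integral_rpow (Or.inl (by norm_num))]
      rw [Real.sqrt_eq_rpow, show ((1:ℝ)-1) = 0 by norm_num,
        Real.zero_rpow (by norm_num)]
      norm_num
      ring
    rw [h2]
    simp
  · rw [← Measure.restrict_congr_set MeasureTheory.Ioc_ae_eq_Icc]
    filter_upwards [ae_restrict_mem measurableSet_Ioc] with ξ hξ
    exact sch_integrand_le m hm hξ.1

lemma sch_sqrt_div_tendsto : Tendsto (fun r : ℝ => Real.sqrt (r - 1) / r) atTop (nhds 0) := by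
  have hs : Tendsto (fun r : ℝ => (Real.sqrt r)⁻¹) atTop (nhds 0) := by
    apply Filter.Tendsto.comp tendsto_inv_atTop_zero
    apply Filter.Tendsto.congr' _ (tendsto_rpow_atTop (by norm_num : (0:ℝ) < 1/2))
    filter_upwards with r
    rw [Real.sqrt_eq_rpow]
  apply tendsto_of_tendsto_of_tendsto_of_le_of_le' tendsto_const_nhds hs
  · filter_upwards [eventually_ge_atTop (1:ℝ)] with r hr
    positivity
  · filter_upwards [eventually_ge_atTop (1:ℝ)] with r hr
    have h0 : (0:ℝ) < r := by linarith
    calc Real.sqrt (r-1) / r ≤ Real.sqrt r / r := by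
          gcongr
          linarith
      _ = (Real.sqrt r)⁻¹ := Real.sqrt_div_self

lemma sch_sub_one_div_tendsto : Tendsto (fun r : ℝ => (r - 1) / r) atTop (nhds 1) := by
  have h : Tendsto (fun r : ℝ => 1 - r⁻¹) atTop (nhds 1) := by
    simpa using tendsto_const_nhds.sub (tendsto_inv_atTop_zero (𝕜 := ℝ))
  apply Filter.Tendsto.congr' _ h
  filter_upwards [eventually_ge_atTop (1:ℝ)] with r hr
  have h0 : r ≠ 0 := by linarith
  field_simp

lemma sch_dist_div_tendsto (n : ℕ) (hn : 3 ≤ n) :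
    Tendsto (fun r : ℝ => schDist n r / r) atTop (nhds 1) := by
  have hm : 1 ≤ n - 2 := by omega
  have hupper : Tendsto (fun r : ℝ => (r - 1 + 2 * Real.sqrt (r - 1)) / r) atTop (nhds 1) := by
    have h := sch_sub_one_div_tendsto.add (sch_sqrt_div_tendsto.const_mul (2:ℝ))
    norm_num at h
    apply Filter.Tendsto.congr _ h
    intro r
    rw [add_div, mul_div_assoc]
  apply tendsto_of_tendsto_of_tendsto_of_le_of_le' sch_sub_one_div_tendsto hupper
  · filter_upwards [eventually_ge_atTop (1:ℝ)] with r hr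
    have h0 : (0:ℝ) < r := by linarith
    exact div_le_div_of_nonneg_right (sch_dist_lower (n-2) hm hr) h0.le
  · filter_upwards [eventually_ge_atTop (1:ℝ)] with r hr
    have h0 : (0:ℝ) < r := by linarith
    exact div_le_div_of_nonneg_right (sch_dist_upper (n-2) hm hr) h0.le

lemma schR_lt_two (n : ℕ) (hn : 3 ≤ n) : schR n < 2 := by
  have h3 : (3:ℝ) ≤ (n:ℝ) := by exact_mod_cast hn
  have h2 : ((n:ℝ) - 2)⁻¹ ≤ 1 := by
    rw [inv_le_one_iff₀]
    right; linarith
  calc schR n = ((4:ℝ)/3) ^ (((n:ℝ)-2)⁻¹) := rfl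
    _ ≤ ((4:ℝ)/3) ^ (1:ℝ) := Real.rpow_le_rpow_of_exponent_le (by norm_num) h2
    _ < 2 := by rw [Real.rpow_one]; norm_num

lemma sch_delta_eq (n : ℕ) (hn : 3 ≤ n) {r : ℝ} (hr : 2 ≤ r) :
    schDelta n r / r = 2 / (1 + Real.sqrt ((r ^ (n-2) - 1) / r ^ (n-2))) := by
  have h0 : (0:ℝ) < r := by linarith
  have hR : ¬ r < schR n := not_lt.mpr ((schR_lt_two n hn).le.trans hr)
  rw [schDelta, if_neg hR]
  set s := Real.sqrt ((r ^ (n-2) - 1) / r ^ (n-2)) with hs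
  have hpm : (0:ℝ) < r ^ (n-2) := by positivity
  have h1r : (1:ℝ) ≤ r ^ (n-2) := by
    calc (1:ℝ) = 1 ^ (n-2) := (one_pow _).symm
      _ ≤ r ^ (n-2) := pow_le_pow_left₀ zero_le_one (by linarith) _
  have hA0 : (0:ℝ) ≤ (r ^ (n-2) - 1) / r ^ (n-2) := by
    apply div_nonneg _ hpm.le; linarith
  have hs0 : 0 ≤ s := Real.sqrt_nonneg _
  have hs2 : s ^ 2 = (r ^ (n-2) - 1) / r ^ (n-2) := Real.sq_sqrt hA0
  have hinv : r ^ (n-2) * (r ^ (n-2))⁻¹ = 1 := mul_inv_cancel₀ hpm.ne'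
  have hkey : (1 - s) * (1 + s) = (r ^ (n-2))⁻¹ := by
    have e : (1:ℝ) - (r ^ (n-2) - 1) / r ^ (n-2) = (r ^ (n-2))⁻¹ := by
      field_simp
      ring
    calc (1 - s) * (1 + s) = 1 - s ^ 2 := by ring
      _ = (r ^ (n-2))⁻¹ := by rw [hs2]; exact e
  have hpow : r ^ (n-1) = r ^ (n-2) * r := by
    rw [← pow_succ]; congr 1; omega
  have h1s : (0:ℝ) < 1 + s := by linarith
  rw [hpow, div_eq_div_iff h0.ne' h1s.ne']
  linear_combination (2 * (r ^ (n-2)) * r) * hkey + 2 * r * hinv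

lemma sch_delta_div_tendsto (n : ℕ) (hn : 3 ≤ n) :
    Tendsto (fun r : ℝ => schDelta n r / r) atTop (nhds 1) := by
  have hm : n - 2 ≠ 0 := by omega
  have hA : Tendsto (fun r : ℝ => (r ^ (n-2) - 1) / r ^ (n-2)) atTop (nhds 1) := by
    have h1 : Tendsto (fun r : ℝ => 1 - (r ^ (n-2))⁻¹) atTop (nhds 1) := by
      have h := (tendsto_pow_atTop hm (α := ℝ)).inv_tendsto_atTop
      simpa using tendsto_const_nhds.sub h
    apply Filter.Tendsto.congr' _ h1
    filter_upwards [eventually_ge_atTop (1:ℝ)] with r hr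
    have h0 : (0:ℝ) < r := by linarith
    have hne : r ^ (n-2) ≠ 0 := by positivity
    field_simp
  have hs : Tendsto (fun r : ℝ => Real.sqrt ((r ^ (n-2) - 1) / r ^ (n-2))) atTop (nhds 1) := by
    have h := (Real.continuous_sqrt.tendsto 1).comp hA
    simpa [Function.comp_def] using h
  have h2 : Tendsto (fun r : ℝ => 1 + Real.sqrt ((r ^ (n-2) - 1) / r ^ (n-2))) atTop (nhds 2) := by
    have h := hs.const_add (1:ℝ)
    norm_num at h
    exact h
  have hq : Tendsto (fun r : ℝ => 2 / (1 + Real.sqrt ((r ^ (n-2) - 1) / r ^ (n-2))))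
      atTop (nhds 1) := by
    have h := Filter.Tendsto.div
      (tendsto_const_nhds : Tendsto (fun _ : ℝ => (2:ℝ)) atTop (nhds 2)) h2 two_ne_zero
    norm_num at h
    exact h
  apply Filter.Tendsto.congr' _ hq
  filter_upwards [eventually_ge_atTop (2:ℝ)] with r hr
  exact (sch_delta_eq n hn hr).symm

/-- `d(r)/δ(r) → 1` as `r → ∞`. -/
theorem schDist_div_schDelta_tendsto_atTop (n : ℕ) (hn : 3 ≤ n) :
    Filter.Tendsto (fun r : ℝ => schDist n r / schDelta n r) Filter.atTop (nhds 1) := by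
  have h := (sch_dist_div_tendsto n hn).div (sch_delta_div_tendsto n hn) one_ne_zero
  norm_num at h
  apply Filter.Tendsto.congr' _ h
  filter_upwards [eventually_ge_atTop (2:ℝ)] with r hr
  have h0 : r ≠ 0 := by linarith
  simp only [Pi.div_apply]
  rw [div_div_div_cancel_right₀ h0]
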